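/- For the binary symmetric double sources with parameters p, q ∈ (0,1/2), p ≠ q, the SHA binning exponent E_b(R) = min[ min_{P̃: P̃_X = P_X, P̃_Y = P_Y, H(X̃|Ỹ) ≥ H(X|Y)} D(P̃ ‖ Q_{XY}) + |R − H(X|Y)|⁺ , D(P_{XY}‖Q_{XY}) ] satisfies: for R ≥ h(p), E_b(R) = min[ |R − h(p)|⁺, D(p‖q) ] if h(p) ≤ h(q), and E_b(R) = D(p‖q) if h(p) > h(q). -/

import Mathlib

open Real

/-- Binary symmetric double source with crossover probability `r`. -/
noncomputable def bsds (r : ℝ) : Fin 2 → Fin 2 → ℝ :=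
  fun x y => if x = y then (1 - r) / 2 else r / 2

/-- Binary KL divergence. -/
noncomputable def klB (p q : ℝ) : ℝ :=
  p * Real.log (p / q) + (1 - p) * Real.log ((1 - p) / (1 - q))

/-- Binary entropy. -/
noncomputable def hbin (p : ℝ) : ℝ := -(p * Real.log p + (1 - p) * Real.log (1 - p))

/-- KL divergence on a finite product alphabet. -/
noncomputable def kl2 {X Y : Type*} [Fintype X] [Fintype Y] (P Q : X → Y → ℝ) : ℝ :=
  ∑ x, ∑ y, P x y * Real.log (P x y / Q x y)

/-- Conditional entropy `H(X̃|Ỹ)` of a joint distribution. -/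
noncomputable def condEnt {X Y : Type*} [Fintype X] [Fintype Y] (P : X → Y → ℝ) : ℝ :=
  ∑ x, ∑ y, P x y * Real.log ((∑ x', P x' y) / P x y)

/-- The inner minimization of the SHA binning bound for the BSDS:
minimum of `D(P̃‖Q_{XY})` over `P̃` with marginals `P_X`, `P_Y` (uniform) and
`H(X̃|Ỹ) ≥ H(X|Y) = h(p)`. -/
noncomputable def innerMin (p q : ℝ) : ℝ :=
  sInf {d : ℝ | ∃ Pt : Fin 2 → Fin 2 → ℝ,
    (∀ x y, 0 ≤ Pt x y) ∧
    (∀ x, ∑ y, Pt x y = 1 / 2) ∧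
    (∀ y, ∑ x, Pt x y = 1 / 2) ∧
    condEnt Pt ≥ hbin p ∧
    d = kl2 Pt (bsds q)}

/-- The SHA binning exponent for the BSDS. -/
noncomputable def Eb (p q R : ℝ) : ℝ :=
  min (innerMin p q + max (R - hbin p) 0) (klB p q)

lemma half_div_half (a b : ℝ) : (a/2)/(b/2) = a/b := by
  simp [div_eq_mul_inv, mul_inv]; ring

lemma hbin_eq (p : ℝ) : hbin p = Real.binEntropy p := by
  simp [hbin, Real.binEntropy, Real.log_inv]; ring

lemma condEnt_bsds (r : ℝ) : condEnt (bsds r) = hbin r := by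
  simp only [condEnt, Fin.sum_univ_two, bsds]
  norm_num
  rw [show (1-r)/2 + r/2 = 1/2 by ring, show r/2 + (1-r)/2 = 1/2 by ring,
    half_div_half, half_div_half, one_div, one_div, Real.log_inv, Real.log_inv]
  simp [hbin]; ring

lemma kl2_bsds (r s : ℝ) : kl2 (bsds r) (bsds s) = klB r s := by
  simp only [kl2, Fin.sum_univ_two, bsds]
  norm_num [half_div_half, klB]
  ring


lemma klB_nonneg {r s : ℝ} (hr0 : 0 ≤ r) (hr1 : r ≤ 1) (hs0 : 0 < s) (hs1 : s < 1) :
    0 ≤ klB r s := by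
  rcases eq_or_lt_of_le hr0 with h0 | h0
  · simp only [klB, ← h0]
    norm_num
    exact Real.log_nonpos (by linarith) (by linarith)
  rcases eq_or_lt_of_le hr1 with h1 | h1
  · simp only [klB, h1]
    norm_num
    exact Real.log_nonpos hs0.le hs1.le
  · have e1 : r * Real.log (s / r) ≤ r * (s / r - 1) :=
      mul_le_mul_of_nonneg_left (Real.log_le_sub_one_of_pos (div_pos hs0 h0)) hr0
    have e2 : (1 - r) * Real.log ((1 - s) / (1 - r)) ≤ (1 - r) * ((1 - s) / (1 - r) - 1) :=
      mul_le_mul_of_nonneg_left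
        (Real.log_le_sub_one_of_pos (div_pos (by linarith) (by linarith))) (by linarith)
    have f1 : r * (s / r - 1) = s - r := by field_simp
    have f2 : (1 - r) * ((1 - s) / (1 - r) - 1) = r - s := by
      field_simp [show (1:ℝ) - r ≠ 0 by linarith]
      ring
    have g1 : Real.log (r / s) = - Real.log (s / r) := by
      rw [← Real.log_inv]; congr 1; field_simp
    have g2 : Real.log ((1 - r) / (1 - s)) = - Real.log ((1 - s) / (1 - r)) := by
      rw [← Real.log_inv]; congr 1; field_simp
    simp only [klB, g1, g2]
    nlinarith

lemma klB_mono {p q r : ℝ} (hq0 : 0 < q) (hqp : q < p) (hp1 : p < 1)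
    (hpr : p ≤ r) (hr1 : r ≤ 1) : klB p q ≤ klB r q := by
  have hr0 : 0 < r := lt_of_lt_of_le (lt_trans hq0 hqp) hpr
  have key : klB r q = klB r p + r * (Real.log p - Real.log q)
      + (1 - r) * (Real.log (1 - p) - Real.log (1 - q)) := by
    rcases eq_or_lt_of_le hr1 with h1 | h1
    · simp only [klB, h1]
      norm_num
      ring
    · simp only [klB, Real.log_div (by linarith : r ≠ 0) (by linarith : q ≠ 0),
        Real.log_div (by linarith : r ≠ 0) (by linarith : p ≠ 0),
        Real.log_div (by linarith : (1:ℝ) - r ≠ 0) (by linarith : (1:ℝ) - q ≠ 0),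
        Real.log_div (by linarith : (1:ℝ) - r ≠ 0) (by linarith : (1:ℝ) - p ≠ 0)]
      ring
  have kp : klB p q = p * (Real.log p - Real.log q)
      + (1 - p) * (Real.log (1 - p) - Real.log (1 - q)) := by
    simp only [klB, Real.log_div (by linarith : p ≠ 0) (by linarith : q ≠ 0),
      Real.log_div (by linarith : (1:ℝ) - p ≠ 0) (by linarith : (1:ℝ) - q ≠ 0)]
  have hrp : 0 ≤ klB r p := klB_nonneg (le_of_lt hr0) hr1 (lt_trans hq0 hqp) hp1
  have l1 : Real.log q < Real.log p := Real.log_lt_log hq0 hqp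
  have l2 : Real.log (1 - p) < Real.log (1 - q) := Real.log_lt_log (by linarith) (by linarith)
  nlinarith [hpr]

lemma feas_form (Pt : Fin 2 → Fin 2 → ℝ)
    (hnn : ∀ x y, 0 ≤ Pt x y)
    (hrow : ∀ x, ∑ y, Pt x y = 1 / 2)
    (hcol : ∀ y, ∑ x, Pt x y = 1 / 2) :
    ∃ r : ℝ, 0 ≤ r ∧ r ≤ 1 ∧ Pt = bsds r := by
  have h1 := hrow 0; have h2 := hrow 1; have h3 := hcol 0
  simp only [Fin.sum_univ_two] at h1 h2 h3
  refine ⟨2 * Pt 0 1, by linarith [hnn 0 1], by linarith [hnn 0 0], ?_⟩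
  funext x y
  fin_cases x <;> fin_cases y <;>
    simp [bsds, Fin.ext_iff] <;> linarith

lemma bsds_feas (r : ℝ) (h0 : 0 ≤ r) (h1 : r ≤ 1) :
    (∀ x y, 0 ≤ bsds r x y) ∧ (∀ x, ∑ y, bsds r x y = 1 / 2) ∧
    (∀ y, ∑ x, bsds r x y = 1 / 2) := by
  refine ⟨fun x y => ?_, fun x => ?_, fun y => ?_⟩
  · dsimp [bsds]; split <;> linarith
  · fin_cases x <;> simp [Fin.sum_univ_two, bsds, Fin.ext_iff] <;> ring
  · fin_cases y <;> simp [Fin.sum_univ_two, bsds] <;> ring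


/-- For `R ≥ h(p)`, `E_b(R) = min[|R − h(p)|⁺, D(p‖q)]` if `h(p) ≤ h(q)` and
`E_b(R) = D(p‖q)` if `h(p) > h(q)`. -/
theorem stmt6 (p q : ℝ) (hp : 0 < p ∧ p < 1 / 2) (hq : 0 < q ∧ q < 1 / 2) (hpq : p ≠ q)
    (R : ℝ) (hR : R ≥ hbin p) :
    Eb p q R = if hbin p ≤ hbin q then min (max (R - hbin p) 0) (klB p q) else klB p q := by
  obtain ⟨hp0, hp2⟩ := hp
  obtain ⟨hq0, hq2⟩ := hq
  set S := {d : ℝ | ∃ Pt : Fin 2 → Fin 2 → ℝ,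
    (∀ x y, 0 ≤ Pt x y) ∧
    (∀ x, ∑ y, Pt x y = 1 / 2) ∧
    (∀ y, ∑ x, Pt x y = 1 / 2) ∧
    condEnt Pt ≥ hbin p ∧
    d = kl2 Pt (bsds q)} with hS
  by_cases hcase : hbin p ≤ hbin q
  · -- innerMin = 0
    have hmem : (0 : ℝ) ∈ S := by
      obtain ⟨nn, row, col⟩ := bsds_feas q hq0.le (by linarith)
      exact ⟨bsds q, nn, row, col, by rw [condEnt_bsds]; exact hcase, by
        rw [kl2_bsds]; simp [klB, div_self (ne_of_gt hq0),
          div_self (by linarith : (1:ℝ) - q ≠ 0)]⟩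
    have hlb : ∀ d ∈ S, (0:ℝ) ≤ d := by
      rintro d ⟨Pt, nn, row, col, hce, rfl⟩
      obtain ⟨r, hr0, hr1, rfl⟩ := feas_form Pt nn row col
      rw [kl2_bsds]
      exact klB_nonneg hr0 hr1 hq0 (by linarith)
    have him : innerMin p q = 0 := by
      rw [innerMin, ← hS]
      exact le_antisymm (csInf_le ⟨0, hlb⟩ hmem) (le_csInf ⟨0, hmem⟩ hlb)
    rw [if_pos hcase, Eb, him, zero_add]
  · -- q < p
    have hqp : q < p := by
      by_contra h
      push_neg at h
      exact hcase (by
        rw [hbin_eq, hbin_eq]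
        exact Real.binEntropy_strictMonoOn.monotoneOn
          ⟨hp0.le, by norm_num; linarith⟩ ⟨hq0.le, by norm_num; linarith⟩ h)
    have hlb : ∀ d ∈ S, klB p q ≤ d := by
      rintro d ⟨Pt, nn, row, col, hce, rfl⟩
      obtain ⟨r, hr0, hr1, rfl⟩ := feas_form Pt nn row col
      rw [kl2_bsds]
      rw [condEnt_bsds] at hce
      have hpr : p ≤ r := by
        by_contra h
        push_neg at h
        have : Real.binEntropy r < Real.binEntropy p :=
          Real.binEntropy_strictMonoOn ⟨hr0, by norm_num; linarith⟩
            ⟨hp0.le, by norm_num; linarith⟩ h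
        rw [← hbin_eq, ← hbin_eq] at this
        linarith [hce]
      exact klB_mono hq0 hqp (by linarith) hpr hr1
    have hne : S.Nonempty := by
      obtain ⟨nn, row, col⟩ := bsds_feas p hp0.le (by linarith)
      exact ⟨klB p q, bsds p, nn, row, col, by rw [condEnt_bsds], by rw [kl2_bsds]⟩
    have him : klB p q ≤ innerMin p q := by
      rw [innerMin, ← hS]
      exact le_csInf hne hlb
    rw [if_neg hcase, Eb]
    exact min_eq_right (by
      have : (0:ℝ) ≤ max (R - hbin p) 0 := le_max_right _ _
      linarith)
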